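/- For integers n, k ≥ 1 let t₀^{(k)}(n) be the unique complex solution of t e^t = n i/(2πk) with 0 < Im t < π, and set A_k(n) = Re(log t₀^{(k)}(n) − 1/t₀^{(k)}(n)). Then for each fixed integer k ≥ 2 and every real p, n^p · exp( n·(A_k(n) − A_1(n)) ) → 0 as n → ∞; i.e., the saddle heights e^{n A_k(n)} for k ≥ 2 are smaller than e^{n A_1(n)} by more than any power of n. -/

import Mathlib

open Complex Real Filter Topology

set_option maxHeartbeats 1000000

lemma saddle_struct (t : ℂ) (c : ℝ) (hc : 0 < c) (him0 : 0 < t.im) (himpi : t.im < π)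
    (heq : t * Complex.exp t = (c : ℂ) * Complex.I) :
    0 < t.re ∧ t.im < π/2 ∧
    Real.cos t.im * ‖t‖ = t.im ∧
    Real.sin t.im * ‖t‖ = t.re ∧
    Real.exp t.re * ‖t‖ = c ∧
    t.re = t.im * Real.tan t.im := by
  set x := t.re with hxdef
  set y := t.im with hydef
  set r := ‖t‖ with hrdef
  have hre : Real.exp x * (x * Real.cos y - y * Real.sin y) = 0 := by
    have h := congrArg Complex.re heq
    simp [Complex.mul_re, Complex.exp_re, Complex.exp_im] at h
    ring_nf at h ⊢
    linarith [h]
  have him : Real.exp x * (x * Real.sin y + y * Real.cos y) = c := by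
    have h := congrArg Complex.im heq
    simp [Complex.mul_im, Complex.exp_re, Complex.exp_im] at h
    ring_nf at h ⊢
    linarith [h]
  have hexp := Real.exp_pos x
  have hsin : 0 < Real.sin y := Real.sin_pos_of_pos_of_lt_pi him0 himpi
  have hxc : x * Real.cos y = y * Real.sin y := by
    have := mul_eq_zero.mp hre
    rcases this with h | h
    · exact absurd h (ne_of_gt hexp)
    · linarith
  have hcos : 0 < Real.cos y := by
    rcases lt_trichotomy (Real.cos y) 0 with h | h | h
    · exfalso
      have hx' : x < 0 := by nlinarith
      have h2 : x * Real.sin y < 0 := mul_neg_of_neg_of_pos hx' hsin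
      have h3 : y * Real.cos y < 0 := mul_neg_of_pos_of_neg him0 h
      have h4 : Real.exp x * (x * Real.sin y + y * Real.cos y) < 0 :=
        mul_neg_of_pos_of_neg hexp (by linarith)
      linarith
    · exfalso; rw [h] at hxc; nlinarith
    · exact h
  have hy2 : y < π/2 := by
    by_contra hle
    push_neg at hle
    have := Real.cos_nonpos_of_pi_div_two_le_of_le hle (by linarith [Real.pi_pos])
    linarith
  have hx : 0 < x := by nlinarith
  have hr2 : r^2 = x^2 + y^2 := by
    rw [hrdef, Complex.sq_norm, Complex.normSq_apply]; ring
  have him0' : t.im ≠ 0 := by rw [← hydef]; exact ne_of_gt him0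
  have hrpos : 0 < r := by
    rw [hrdef]
    exact norm_pos_iff.mpr (fun h0 => him0' (by rw [h0]; simp))
  have hpy : Real.sin y ^ 2 + Real.cos y ^ 2 = 1 := Real.sin_sq_add_cos_sq y
  have hcr : Real.cos y * r = y := by
    have hsq : (Real.cos y * r - y) * (Real.cos y * r + y) = 0 := by
      linear_combination (Real.cos y)^2 * hr2 + (x*Real.cos y + y*Real.sin y) * hxc + y^2 * hpy
    rcases mul_eq_zero.mp hsq with h | h
    · linarith
    · exfalso; have := mul_pos hcos hrpos; linarith
  have hsr : Real.sin y * r = x := by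
    have : (Real.sin y * r) * Real.cos y = x * Real.cos y := by nlinarith
    exact mul_right_cancel₀ (ne_of_gt hcos) this
  have her : Real.exp x * r = c := by
    have h5 : (Real.exp x * r) * r = c * r := by
      linear_combination r * him - Real.exp x * x * hsr - Real.exp x * y * hcr + Real.exp x * hr2
    exact mul_right_cancel₀ (ne_of_gt hrpos) h5
  have htan : x = y * Real.tan y := by
    rw [Real.tan_eq_sin_div_cos]
    field_simp
    linarith [hxc]
  exact ⟨hx, hy2, hcr, hsr, her, htan⟩

lemma saddle_mono (a b yk y1 r s ck c1 : ℝ)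
    (hyk0 : 0 < yk) (hyk2 : yk < π/2) (hy10 : 0 < y1) (hy12 : y1 < π/2)
    (hak : a = yk * Real.tan yk) (hb : b = y1 * Real.tan y1)
    (hr : r^2 = a^2 + yk^2) (hs : s^2 = b^2 + y1^2) (hr0 : 0 < r) (hs0 : 0 < s)
    (hek : Real.exp a * r = ck) (he1 : Real.exp b * s = c1) (hc : ck < c1) :
    a < b ∧ r < s := by
  have htk : 0 < Real.tan yk := Real.tan_pos_of_pos_of_lt_pi_div_two hyk0 hyk2
  have ht1 : 0 < Real.tan y1 := Real.tan_pos_of_pos_of_lt_pi_div_two hy10 hy12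
  have hy : yk < y1 := by
    by_contra h
    push_neg at h
    have hba : b ≤ a := by
      rcases eq_or_lt_of_le h with h' | h'
      · rw [hak, hb, h']
      · have := Real.tan_lt_tan_of_nonneg_of_lt_pi_div_two hy10.le hyk2 h'
        rw [hak, hb]
        nlinarith
    have hsr : s ≤ r := by
      have hb0 : 0 < b := by rw [hb]; positivity
      have : s^2 ≤ r^2 := by rw [hr, hs]; nlinarith
      nlinarith
    have : c1 ≤ ck := by
      rw [← hek, ← he1]
      have := Real.exp_le_exp.mpr hba
      nlinarith [Real.exp_pos b]
    linarith
  have htlt := Real.tan_lt_tan_of_nonneg_of_lt_pi_div_two hyk0.le hy12 hy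
  have hab : a < b := by rw [hak, hb]; nlinarith
  have ha0 : 0 < a := by rw [hak]; positivity
  refine ⟨hab, ?_⟩
  have : r^2 < s^2 := by rw [hr, hs]; nlinarith
  nlinarith

lemma saddle_key (K L a b r s : ℝ) (hK : 2 ≤ K)
    (ha : 100 ≤ a) (hab : a < b)
    (hr1 : a ≤ r) (hr2 : r^2 ≤ a^2 + 4)
    (hs1 : b ≤ s) (hs2 : s^2 ≤ b^2 + 4)
    (hrs : r ≤ s)
    (hbal : b + Real.log s = a + Real.log r + Real.log K)
    (hbL : b ≤ L) :
    1/(5*L) ≤ (Real.log s - b/s^2) - (Real.log r - a/r^2) := by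
  have ha0 : (0:ℝ) < a := by linarith
  have hb0 : (0:ℝ) < b := by linarith
  have hr0 : (0:ℝ) < r := by linarith
  have hs0 : (0:ℝ) < s := by linarith
  have hL0 : (0:ℝ) < L := by linarith
  have hb100 : (100:ℝ) ≤ b := by linarith
  have hra : r ≤ a + 2/a := by
    by_contra h
    push_neg at h
    have h2 : (a + 2/a)^2 < r^2 := by
      have h0 : 0 < a + 2/a := by positivity
      nlinarith
    have h3 : (a + 2/a)^2 = a^2 + 4 + 4/a^2 := by field_simp; ring
    have h4 : 0 < 4/a^2 := by positivity
    linarith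
  have hsb : s ≤ b + 2/b := by
    by_contra h
    push_neg at h
    have h2 : (b + 2/b)^2 < s^2 := by
      have h0 : 0 < b + 2/b := by positivity
      nlinarith
    have h3 : (b + 2/b)^2 = b^2 + 4 + 4/b^2 := by field_simp; ring
    have h4 : 0 < 4/b^2 := by positivity
    linarith
  have h2a : 2/a ≤ 1/50 := by rw [div_le_div_iff₀ ha0 (by norm_num)]; linarith
  have h2b : 2/b ≤ 1/50 := by rw [div_le_div_iff₀ hb0 (by norm_num)]; linarith
  have hlogK : (0.6931471803 : ℝ) ≤ Real.log K := by
    have h1 := Real.log_two_gt_d9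
    have h2 : Real.log 2 ≤ Real.log K := Real.log_le_log (by norm_num) hK
    linarith
  have hlog_up : Real.log s - Real.log r ≤ (s - r)/a := by
    have h1 : Real.log s - Real.log r = Real.log (s/r) :=
      (Real.log_div hs0.ne' hr0.ne').symm
    have h2 : Real.log (s/r) ≤ s/r - 1 := Real.log_le_sub_one_of_pos (by positivity)
    have h3 : s/r - 1 = (s-r)/r := by field_simp
    have h4 : (s-r)/r ≤ (s-r)/a := by
      apply div_le_div_of_nonneg_left (by linarith) ha0 hr1
    linarith
  have hba : 1/2 ≤ b - a := by
    have h1 : Real.log K - (b - a) = Real.log s - Real.log r := by linarith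
    have h2 : s - r ≤ (b - a) + 1/50 := by linarith
    have h3 : (s - r)/a ≤ ((b-a) + 1/50)/a :=
      div_le_div_of_nonneg_right h2 ha0.le
    have h4 : Real.log K - (b - a) ≤ ((b-a) + 1/50)/a := by linarith
    have h5 : a * (Real.log K - (b - a)) ≤ (b-a) + 1/50 := by
      exact (le_div_iff₀' ha0).mp h4
    nlinarith
  have hsr48 : 12/25 ≤ s - r := by linarith
  have hlog_low : (12/25)/(b + 1/50) ≤ Real.log s - Real.log r := by
    have h1 : Real.log r - Real.log s = Real.log (r/s) :=
      (Real.log_div hr0.ne' hs0.ne').symm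
    have h2 : Real.log (r/s) ≤ r/s - 1 := Real.log_le_sub_one_of_pos (by positivity)
    have h3 : 1 - r/s = (s-r)/s := by field_simp
    have h4 : (12/25)/(b + 1/50) ≤ (s-r)/s :=
      div_le_div₀ (by linarith) hsr48 hs0 (by linarith)
    linarith
  have hlog_low2 : 2/(5*L) ≤ Real.log s - Real.log r := by
    have h1 : 2/(5*L) ≤ (12/25)/(b + 1/50) := by
      rw [div_le_div_iff₀ (by positivity) (by positivity)]
      linarith
    linarith
  have hfrac : b/s^2 ≤ a/r^2 := by
    have h1 : b/s^2 ≤ 1/b := by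
      rw [div_le_div_iff₀ (by positivity) hb0]
      nlinarith [mul_self_le_mul_self hb0.le hs1]
    have h2 : 1/b ≤ a/(a^2+4) := by
      rw [div_le_div_iff₀ hb0 (by positivity)]
      nlinarith [mul_le_mul_of_nonneg_left hba ha0.le]
    have h3 : a/(a^2+4) ≤ a/r^2 :=
      div_le_div_of_nonneg_left ha0.le (by positivity) hr2
    linarith
  have hfin : 1/(5*L) ≤ 2/(5*L) :=
    div_le_div_of_nonneg_right (by norm_num) (by positivity)
  linarith

lemma saddle_limit (p : ℝ) :
    Tendsto (fun n : ℕ => (n:ℝ)^p * Real.exp (-((n:ℝ) / (5 * Real.log n)))) atTop (nhds 0) := by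
  have hquarter : Tendsto (fun n:ℕ => (n:ℝ)^(1/4:ℝ)) atTop atTop :=
    (tendsto_rpow_atTop (by norm_num)).comp tendsto_natCast_atTop_atTop
  have hhalf : Tendsto (fun n:ℕ => (n:ℝ)^(1/2:ℝ)) atTop atTop :=
    (tendsto_rpow_atTop (by norm_num)).comp tendsto_natCast_atTop_atTop
  have hg : Tendsto (fun n:ℕ => (n:ℝ)/(5*Real.log n) - Real.log n * p) atTop atTop := by
    apply tendsto_atTop_mono' atTop ?_ hquarter
    filter_upwards [eventually_ge_atTop 3, hhalf.eventually_ge_atTop (80*|p|+20)]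
      with n hn3 hnh
    have hx3 : (3:ℝ) ≤ (n:ℝ) := by exact_mod_cast hn3
    have hx0 : (0:ℝ) < (n:ℝ) := by linarith
    have hlog1 : 1 ≤ Real.log (n:ℝ) := by
      rw [Real.le_log_iff_exp_le hx0]
      have := Real.exp_one_lt_d9
      linarith
    have hlog4 : Real.log (n:ℝ) ≤ 4 * (n:ℝ)^(1/4:ℝ) := by
      have h := Real.log_le_rpow_div hx0.le (by norm_num : (0:ℝ) < 1/4)
      have h2 : (n:ℝ)^(1/4:ℝ)/(1/4) = 4*(n:ℝ)^(1/4:ℝ) := by ring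
      linarith
    have hq0 : (0:ℝ) < (n:ℝ)^(1/4:ℝ) := Real.rpow_pos_of_pos hx0 _
    have hh0 : (0:ℝ) < (n:ℝ)^(1/2:ℝ) := Real.rpow_pos_of_pos hx0 _
    have hsplit : (n:ℝ)^(3/4:ℝ) = (n:ℝ)^(1/4:ℝ) * (n:ℝ)^(1/2:ℝ) := by
      rw [← Real.rpow_add hx0]; norm_num
    have hmain1 : (n:ℝ)^(3/4:ℝ)/20 ≤ (n:ℝ)/(5*Real.log (n:ℝ)) := by
      rw [div_le_div_iff₀ (by norm_num) (by positivity)]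
      have h1 : (n:ℝ)^(3/4:ℝ) * (5*Real.log (n:ℝ)) ≤ (n:ℝ)^(3/4:ℝ) * (20 * (n:ℝ)^(1/4:ℝ)) :=
        mul_le_mul_of_nonneg_left (by linarith) (le_of_lt (Real.rpow_pos_of_pos hx0 _))
      have h2 : (n:ℝ)^(3/4:ℝ) * (n:ℝ)^(1/4:ℝ) = (n:ℝ) := by
        rw [← Real.rpow_add hx0]; norm_num
      nlinarith [h1, h2]
    have hp1 : Real.log (n:ℝ) * p ≤ 4*|p| * (n:ℝ)^(1/4:ℝ) := by
      have h1 : Real.log (n:ℝ) * p ≤ Real.log (n:ℝ) * |p| :=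
        mul_le_mul_of_nonneg_left (le_abs_self p) (by linarith)
      have h2 : Real.log (n:ℝ) * |p| ≤ (4*(n:ℝ)^(1/4:ℝ)) * |p| :=
        mul_le_mul_of_nonneg_right hlog4 (abs_nonneg p)
      nlinarith [h1, h2]
    have hfin : (n:ℝ)^(1/4:ℝ) + 4*|p| * (n:ℝ)^(1/4:ℝ) ≤ (n:ℝ)^(3/4:ℝ)/20 := by
      rw [hsplit]
      have h1 : (n:ℝ)^(1/4:ℝ) * (80*|p|+20) ≤ (n:ℝ)^(1/4:ℝ) * (n:ℝ)^(1/2:ℝ) :=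
        mul_le_mul_of_nonneg_left hnh hq0.le
      nlinarith [h1]
    linarith
  have hgneg : Tendsto (fun n:ℕ => Real.log n * p - (n:ℝ)/(5*Real.log n)) atTop atBot := by
    have := tendsto_neg_atTop_atBot.comp hg
    refine this.congr (fun n => ?_)
    simp [Function.comp]
  have hcomp : Tendsto (fun n:ℕ => Real.exp (Real.log n * p - (n:ℝ)/(5*Real.log n)))
      atTop (nhds 0) := Real.tendsto_exp_atBot.comp hgneg
  refine hcomp.congr' ?_
  filter_upwards [eventually_ge_atTop 1] with n hn
  have hx0 : (0:ℝ) < (n:ℝ) := by exact_mod_cast hn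
  rw [Real.rpow_def_of_pos hx0, ← Real.exp_add]
  ring_nf

theorem saddle_heights_k_ge_two_negligible (t₀ : ℕ → ℕ → ℂ)
    (ht₀ : ∀ k : ℕ, 1 ≤ k → ∀ n : ℕ, 1 ≤ n → (0 < (t₀ k n).im ∧ (t₀ k n).im < π ∧
      t₀ k n * Complex.exp (t₀ k n) = n * Complex.I / (2 * π * k)))
    (k : ℕ) (hk : 2 ≤ k) (p : ℝ) :
    Tendsto (fun n : ℕ =>
        (n : ℝ) ^ p * Real.exp ((n : ℝ) *
          ((Complex.log (t₀ k n) - 1 / t₀ k n).re - (Complex.log (t₀ 1 n) - 1 / t₀ 1 n).re)))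
      atTop (nhds 0) := by
  have hπ := Real.pi_pos
  have hπ4 := Real.pi_le_four
  have hπ3 := Real.pi_gt_three
  have hk1 : (1:ℕ) ≤ k := le_trans (by norm_num) hk
  have habs2 : ∀ t : ℂ, (‖t‖)^2 = t.re^2 + t.im^2 := fun t => by
    rw [Complex.sq_norm, Complex.normSq_apply]; ring
  have hstruct : ∀ (j n : ℕ), 1 ≤ j → 1 ≤ n →
      0 < (t₀ j n).re ∧ (t₀ j n).im < π/2 ∧
      Real.cos (t₀ j n).im * ‖t₀ j n‖ = (t₀ j n).im ∧
      Real.sin (t₀ j n).im * ‖t₀ j n‖ = (t₀ j n).re ∧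
      Real.exp (t₀ j n).re * ‖t₀ j n‖ = (n:ℝ)/(2*π*j) ∧
      (t₀ j n).re = (t₀ j n).im * Real.tan (t₀ j n).im := by
    intro j n hj hn
    obtain ⟨h1, h2, h3⟩ := ht₀ j hj n hn
    have hj0 : (0:ℝ) < (j:ℝ) := by exact_mod_cast hj
    have hn0 : (0:ℝ) < (n:ℝ) := by exact_mod_cast hn
    have hc : (0:ℝ) < (n:ℝ)/(2*π*j) := by positivity
    apply saddle_struct _ _ hc h1 h2
    rw [h3]
    have hj0' : ((j:ℂ)) ≠ 0 := by exact_mod_cast hj0.ne'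
    have hπ0' : ((π:ℂ)) ≠ 0 := by exact_mod_cast hπ.ne'
    push_cast
    field_simp
    try ring
  have hbigG : ∀ (j : ℕ), 1 ≤ j → ∀ᶠ n : ℕ in atTop, 100 ≤ (t₀ j n).re := by
    intro j hj
    obtain ⟨N, hN⟩ := exists_nat_gt (2*π*(j:ℝ)*(Real.exp 100 * 102))
    filter_upwards [eventually_ge_atTop (max N 1)] with n hn
    have hn1 : 1 ≤ n := le_trans (le_max_right _ _) hn
    have hnN : (N:ℝ) ≤ (n:ℝ) := by exact_mod_cast le_trans (le_max_left _ _) hn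
    obtain ⟨hx, hy2, hcr, hsr, her, htan⟩ := hstruct j n hj hn1
    have hy0 : 0 < (t₀ j n).im := (ht₀ j hj n hn1).1
    by_contra hcon
    push_neg at hcon
    have hr2 : (‖t₀ j n‖)^2 = (t₀ j n).re^2 + (t₀ j n).im^2 := habs2 _
    have hrn : (0:ℝ) ≤ ‖t₀ j n‖ := norm_nonneg _
    have hrle : ‖t₀ j n‖ ≤ (t₀ j n).re + 2 := by nlinarith
    have hexple : Real.exp (t₀ j n).re ≤ Real.exp 100 := Real.exp_le_exp.mpr hcon.le
    have hle : (n:ℝ)/(2*π*j) ≤ Real.exp 100 * 102 := by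
      rw [← her]
      have he0 := Real.exp_pos (t₀ j n).re
      nlinarith [Real.exp_pos (100:ℝ)]
    have hj0 : (0:ℝ) < (j:ℝ) := by exact_mod_cast hj
    have hD : (0:ℝ) < 2*π*(j:ℝ) := by positivity
    rw [div_le_iff₀ hD] at hle
    nlinarith
  have hbound : ∀ᶠ n : ℕ in atTop,
      ((Complex.log (t₀ k n) - 1/t₀ k n).re - (Complex.log (t₀ 1 n) - 1/t₀ 1 n).re)
        ≤ -(1/(5*Real.log n)) := by
    filter_upwards [hbigG k hk1, hbigG 1 le_rfl, eventually_ge_atTop 1] with n hA hB hn1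
    obtain ⟨hxk, hy2k, hcrk, hsrk, herk, htank⟩ := hstruct k n hk1 hn1
    obtain ⟨hx1, hy21, hcr1, hsr1, her1, htan1⟩ := hstruct 1 n le_rfl hn1
    have hy0k : 0 < (t₀ k n).im := (ht₀ k hk1 n hn1).1
    have hy01 : 0 < (t₀ 1 n).im := (ht₀ 1 le_rfl n hn1).1
    set a := (t₀ k n).re
    set b := (t₀ 1 n).re
    set r := ‖t₀ k n‖
    set s := ‖t₀ 1 n‖
    have hr2 : r^2 = a^2 + (t₀ k n).im^2 := habs2 _
    have hs2 : s^2 = b^2 + (t₀ 1 n).im^2 := habs2 _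
    have hrn : (0:ℝ) ≤ r := norm_nonneg _
    have hsn : (0:ℝ) ≤ s := norm_nonneg _
    have hr0 : (0:ℝ) < r := by nlinarith
    have hs0 : (0:ℝ) < s := by nlinarith
    have hn0 : (0:ℝ) < (n:ℝ) := by exact_mod_cast hn1
    have hkR : (2:ℝ) ≤ (k:ℝ) := by exact_mod_cast hk
    have her1' : Real.exp b * s = (n:ℝ)/(2*π) := by rw [her1]; norm_num
    have hck : (n:ℝ)/(2*π*k) < (n:ℝ)/(2*π) := by
      apply div_lt_div_of_pos_left hn0 (by positivity)
      nlinarith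
    obtain ⟨hab, hrs⟩ := saddle_mono a b (t₀ k n).im (t₀ 1 n).im r s
      ((n:ℝ)/(2*π*k)) ((n:ℝ)/(2*π)) hy0k hy2k hy01 hy21 htank htan1 hr2 hs2 hr0 hs0
      herk her1' hck
    have hr1' : a ≤ r := by nlinarith
    have hs1' : b ≤ s := by nlinarith
    have hr2' : r^2 ≤ a^2 + 4 := by nlinarith
    have hs2' : s^2 ≤ b^2 + 4 := by nlinarith
    have hbal : b + Real.log s = a + Real.log r + Real.log (k:ℝ) := by
      have hk0 : ((k:ℝ)) ≠ 0 := by positivity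
      have heq : Real.exp b * s = (k:ℝ) * (Real.exp a * r) := by
        rw [herk, her1']
        field_simp
      have hlog := congrArg Real.log heq
      rw [Real.log_mul (Real.exp_ne_zero b) hs0.ne', Real.log_exp,
        Real.log_mul hk0 (by positivity), Real.log_mul (Real.exp_ne_zero a) hr0.ne',
        Real.log_exp] at hlog
      linarith
    have hbL : b ≤ Real.log n := by
      rw [Real.le_log_iff_exp_le hn0]
      have h1 : Real.exp b * 1 ≤ Real.exp b * s :=
        mul_le_mul_of_nonneg_left (by linarith) (Real.exp_pos b).le
      have h2 : (n:ℝ)/(2*π) ≤ (n:ℝ) := by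
        apply div_le_self hn0.le
        nlinarith
      rw [her1'] at h1
      linarith
    have hkey := saddle_key (k:ℝ) (Real.log n) a b r s hkR hA hab hr1' hr2' hs1' hs2'
      hrs.le hbal hbL
    have hAk : (Complex.log (t₀ k n) - 1/(t₀ k n)).re = Real.log r - a/r^2 := by
      rw [Complex.sub_re, Complex.log_re, one_div, Complex.inv_re, Complex.normSq_eq_norm_sq]
    have hA1 : (Complex.log (t₀ 1 n) - 1/(t₀ 1 n)).re = Real.log s - b/s^2 := by
      rw [Complex.sub_re, Complex.log_re, one_div, Complex.inv_re, Complex.normSq_eq_norm_sq]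
    rw [hAk, hA1]
    linarith
  apply squeeze_zero' (g := fun n : ℕ => (n:ℝ)^p * Real.exp (-((n:ℝ) / (5 * Real.log n))))
  · filter_upwards with n
    positivity
  · filter_upwards [hbound, eventually_ge_atTop 1] with n hb hn1
    have hn0 : (0:ℝ) ≤ (n:ℝ) := Nat.cast_nonneg n
    have h1 : (n:ℝ) * ((Complex.log (t₀ k n) - 1/t₀ k n).re - (Complex.log (t₀ 1 n) - 1/t₀ 1 n).re)
        ≤ (n:ℝ) * (-(1/(5*Real.log n))) := mul_le_mul_of_nonneg_left hb hn0
    have h2 : (n:ℝ) * (-(1/(5*Real.log n))) = -((n:ℝ)/(5*Real.log n)) := by ring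
    exact mul_le_mul_of_nonneg_left (Real.exp_le_exp.mpr (by linarith)) (Real.rpow_nonneg hn0 p)
  · exact saddle_limit p
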